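/- The map sending a maximal mesa set M ∈ AMS_{3k−1} with |M| = 2k−1 to the lattice path with i-th step north if i ∈ M and east otherwise is a bijection onto the set of (2k−1,k)-Dyck paths (lattice paths from (0,0) to (k,2k−1) staying weakly below the line y = x·(2k−1)/k). -/

import Mathlib

/-- `w` (read on positions `1,…,2n`) is a Stirling permutation of order `n`:
each value `1,…,n` appears exactly twice, all letters lie in `[1,n]`, and every
value between the two copies of a value exceeds it. -/
def IsStirling (n : ℕ) (w : ℕ → ℕ) : Prop :=
  (∀ k, 1 ≤ k → k ≤ n → ((Finset.Icc 1 (2*n)).filter (fun i => w i = k)).card = 2) ∧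
  (∀ i, 1 ≤ i → i ≤ 2*n → 1 ≤ w i ∧ w i ≤ n) ∧
  (∀ i j l, 1 ≤ i → i < j → j < l → l ≤ 2*n → w i = w l → w i < w j)

/-- The set of mesas of `w`: values `m` with `w(i-1) < w(i) = w(i+1) = m > w(i+2)`
for some `2 ≤ i ≤ 2n-2`. -/
def MesaSet (n : ℕ) (w : ℕ → ℕ) : Set ℕ :=
  {m | ∃ i, 2 ≤ i ∧ i + 2 ≤ 2*n ∧ w (i-1) < w i ∧ w i = w (i+1) ∧ w (i+2) < w i ∧ w i = m}

/-- The collection of admissible mesa sets of order `n`. -/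
def AMS (n : ℕ) : Set (Set ℕ) := {M | ∃ w, IsStirling n w ∧ MesaSet n w = M}

/-- A subset `S` of `{1,…,3k-1}` encodes a `(2k-1,k)`-Dyck path: the `i`-th step of
the path is north if `i ∈ S` and east otherwise, and after each step the current
lattice point `(a,b)` (with `b` north steps and `a` east steps so far) stays weakly
below the line `y = x·(2k-1)/k`. -/
def IsDyckNorthSet (k : ℕ) (S : Set ℕ) : Prop :=
  S ⊆ Set.Icc 1 (3*k-1) ∧ S.ncard = 2*k - 1 ∧
    ∀ j ≤ 3*k - 1, k * (S ∩ Set.Icc 1 j).ncard ≤ (2*k - 1) * (j - (S ∩ Set.Icc 1 j).ncard)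


open Finset

def rk (s : Finset ℕ) (v : ℕ) : ℕ := (s.filter (· ≤ v)).card

lemma rk_mono (s : Finset ℕ) {v v' : ℕ} (h : v ≤ v') : rk s v ≤ rk s v' :=
  Finset.card_le_card (by intro x hx; simp only [Finset.mem_filter] at *; exact ⟨hx.1, le_trans hx.2 h⟩)

lemma rk_le_card (s : Finset ℕ) (v : ℕ) : rk s v ≤ s.card :=
  Finset.card_le_card (Finset.filter_subset _ _)

lemma rk_zero {s : Finset ℕ} (hs : ∀ x ∈ s, 1 ≤ x) : rk s 0 = 0 := by
  unfold rk
  rw [Finset.card_eq_zero, Finset.filter_eq_empty_iff]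
  intro x hx
  simp only [Nat.le_zero]
  exact fun h => by simpa [h] using hs x hx

lemma rk_succ (s : Finset ℕ) (c : ℕ) (hc : 1 ≤ c) :
    rk s c = rk s (c-1) + (if c ∈ s then 1 else 0) := by
  unfold rk
  have hsplit : s.filter (· ≤ c) = s.filter (· ≤ c - 1) ∪ s.filter (· = c) := by
    ext x
    simp only [Finset.mem_union, Finset.mem_filter]
    constructor
    · rintro ⟨hx, hle⟩
      rcases eq_or_lt_of_le hle with h | h
      · exact Or.inr ⟨hx, h⟩
      · exact Or.inl ⟨hx, by omega⟩
    · rintro (⟨hx, hle⟩ | ⟨hx, heq⟩)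
      · exact ⟨hx, by omega⟩
      · exact ⟨hx, by omega⟩
  rw [hsplit, Finset.card_union_of_disjoint]
  · congr 1
    by_cases h : c ∈ s
    · rw [if_pos h, Finset.filter_eq']
      simp [h]
    · rw [if_neg h, Finset.filter_eq']
      simp [h]
  · rw [Finset.disjoint_left]
    intro a ha hb
    simp only [Finset.mem_filter] at ha hb
    omega

lemma rk_lt_of_mem {s : Finset ℕ} {c v : ℕ} (hc : c ∈ s) (h : v < c) : rk s v < rk s c := by
  have h1 : rk s c = rk s (c-1) + 1 := by
    rw [rk_succ s c (by omega)]
    simp [hc]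
  have h2 : rk s v ≤ rk s (c-1) := rk_mono s (by omega)
  omega

lemma rk_eq_card {s : Finset ℕ} {n v : ℕ} (hs : s ⊆ Finset.Icc 1 n) (h : n ≤ v) :
    rk s v = s.card := by
  unfold rk
  congr 1
  rw [Finset.filter_eq_self]
  intro x hx
  have := hs hx
  simp only [Finset.mem_Icc] at this
  omega

open Classical in
noncomputable def enum (s : Finset ℕ) (j : ℕ) : ℕ :=
  if h : ∃ v, j ≤ rk s v then Nat.find h else 0

section
variable {s : Finset ℕ} {n : ℕ}

lemma enum_ex (hs : s ⊆ Finset.Icc 1 n) {j : ℕ} (hj : j ≤ s.card) : ∃ v, j ≤ rk s v :=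
  ⟨n, by rw [rk_eq_card hs le_rfl]; exact hj⟩

lemma enum_def (hs : s ⊆ Finset.Icc 1 n) {j : ℕ} (hj : j ≤ s.card) :
    j ≤ rk s (enum s j) ∧ ∀ v < enum s j, rk s v < j := by
  classical
  have h := enum_ex hs hj
  unfold enum
  rw [dif_pos h]
  exact ⟨Nat.find_spec h, fun v hv => by
    have := Nat.find_min h hv; omega⟩

/-- basic spec for `enum` with `1 ≤ j ≤ s.card`. -/
lemma enum_spec (hs : s ⊆ Finset.Icc 1 n) {j : ℕ} (h1 : 1 ≤ j) (hj : j ≤ s.card) :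
    enum s j ∈ s ∧ rk s (enum s j) = j ∧ rk s (enum s j - 1) = j - 1 ∧ 1 ≤ enum s j := by
  obtain ⟨hup, hmin⟩ := enum_def hs hj
  set c := enum s j with hc
  have hpos : 1 ≤ c := by
    by_contra h
    have : c = 0 := by omega
    rw [this] at hup
    have : rk s 0 = 0 := rk_zero (fun x hx => (Finset.mem_Icc.mp (hs hx)).1)
    omega
  have hprev : rk s (c - 1) < j := hmin (c-1) (by omega)
  have hstep := rk_succ s c hpos
  have hmem : c ∈ s := by
    by_contra h
    rw [if_neg h] at hstep
    omega
  rw [if_pos hmem] at hstep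
  exact ⟨hmem, by omega, by omega, hpos⟩

lemma enum_mem (hs : s ⊆ Finset.Icc 1 n) {j : ℕ} (h1 : 1 ≤ j) (hj : j ≤ s.card) :
    enum s j ∈ s := (enum_spec hs h1 hj).1

lemma rk_enum (hs : s ⊆ Finset.Icc 1 n) {j : ℕ} (h1 : 1 ≤ j) (hj : j ≤ s.card) :
    rk s (enum s j) = j := (enum_spec hs h1 hj).2.1

lemma rk_enum_pred (hs : s ⊆ Finset.Icc 1 n) {j : ℕ} (h1 : 1 ≤ j) (hj : j ≤ s.card) :
    rk s (enum s j - 1) = j - 1 := (enum_spec hs h1 hj).2.2.1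

/-- `v < enum s j ↔ rk s v < j`. -/
lemma lt_enum_iff (hs : s ⊆ Finset.Icc 1 n) {j v : ℕ} (h1 : 1 ≤ j) (hj : j ≤ s.card) :
    v < enum s j ↔ rk s v < j := by
  constructor
  · exact fun h => (enum_def hs hj).2 v h
  · intro h
    by_contra hle
    push_neg at hle
    have := rk_mono s hle
    have := rk_enum hs h1 hj
    omega

lemma enum_strictMono (hs : s ⊆ Finset.Icc 1 n) {j j' : ℕ} (h1 : 1 ≤ j) (hjj : j < j')
    (hj' : j' ≤ s.card) : enum s j < enum s j' := by
  rw [lt_enum_iff hs (by omega) hj']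
  rw [rk_enum hs h1 (by omega)]
  exact hjj

lemma enum_rk_of_mem (hs : s ⊆ Finset.Icc 1 n) {c : ℕ} (hc : c ∈ s) :
    enum s (rk s c) = c := by
  have hcpos : 1 ≤ c := (Finset.mem_Icc.mp (hs hc)).1
  have h1 : 1 ≤ rk s c := by
    have : rk s 0 = 0 := rk_zero (fun x hx => (Finset.mem_Icc.mp (hs hx)).1)
    have := rk_lt_of_mem hc (show (0:ℕ) < c by omega)
    omega
  have hj : rk s c ≤ s.card := rk_le_card s c
  have hmem := enum_mem hs h1 hj
  have hrk := rk_enum hs h1 hj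
  rcases lt_trichotomy (enum s (rk s c)) c with h | h | h
  · exact absurd hrk (by have := rk_lt_of_mem hc h; omega)
  · exact h
  · exact absurd hrk (by have := rk_lt_of_mem hmem h; omega)

end

lemma rk_sdiff {s : Finset ℕ} {n j : ℕ} (hs : s ⊆ Finset.Icc 1 n) (hj : j ≤ n) :
    rk s j + rk (Finset.Icc 1 n \ s) j = j := by
  classical
  have hunion : s.filter (· ≤ j) ∪ (Finset.Icc 1 n \ s).filter (· ≤ j) = Finset.Icc 1 j := by
    ext x
    simp only [Finset.mem_union, Finset.mem_filter, Finset.mem_sdiff, Finset.mem_Icc]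
    constructor
    · rintro (⟨hx, hle⟩ | ⟨⟨hx, _⟩, hle⟩)
      · have := Finset.mem_Icc.mp (hs hx); omega
      · omega
    · intro hx
      by_cases h : x ∈ s
      · exact Or.inl ⟨h, hx.2⟩
      · exact Or.inr ⟨⟨⟨hx.1, by omega⟩, h⟩, hx.2⟩
  have hdisj : Disjoint (s.filter (· ≤ j)) ((Finset.Icc 1 n \ s).filter (· ≤ j)) := by
    rw [Finset.disjoint_left]
    intro a ha hb
    simp only [Finset.mem_filter, Finset.mem_sdiff] at ha hb
    exact hb.1.2 ha.1
  have := Finset.card_union_of_disjoint hdisj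
  rw [hunion, Nat.card_Icc] at this
  unfold rk
  omega


lemma forward (k : ℕ) (hk : 1 ≤ k) (M : Set ℕ) (hAMS : M ∈ AMS (3*k-1))
    (hcard : M.ncard = 2*k-1) : IsDyckNorthSet k M := by
  classical
  obtain ⟨w, hstir, hmesa⟩ := hAMS
  obtain ⟨hs1, hs2, hs3⟩ := hstir
  have h2n : 2*(3*k-1) = 6*k-2 := by omega
  rw [h2n] at hs1 hs2 hs3
  -- M is a set of values in [1, 3k-1]
  have hMsub : M ⊆ Set.Icc 1 (3*k-1) := by
    intro x hx
    rw [← hmesa] at hx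
    obtain ⟨i, hi2, hi22, _, _, _, hval⟩ := hx
    rw [h2n] at hi22
    have := hs2 i (by omega) (by omega)
    rw [hval] at this
    exact Set.mem_Icc.mpr this
  set Mf : Finset ℕ := (Finset.Icc 1 (3*k-1)).filter (· ∈ M) with hMf_def
  have hMf_coe : (↑Mf : Set ℕ) = M := by
    ext x
    simp only [hMf_def, Finset.coe_filter, Set.mem_setOf_eq, Finset.mem_Icc]
    constructor
    · rintro ⟨_, h⟩; exact h
    · intro h; exact ⟨by have := hMsub h; simpa using this, h⟩
  have hMsub' : Mf ⊆ Finset.Icc 1 (3*k-1) := Finset.filter_subset _ _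
  have hMcard : Mf.card = 2*k-1 := by
    rw [← Set.ncard_coe_finset, hMf_coe]; exact hcard
  -- plateau positions
  set P : Finset ℕ := (Finset.Icc 2 (6*k-4)).filter
    (fun i => w (i-1) < w i ∧ w i = w (i+1) ∧ w (i+2) < w i) with hP_def
  have hMP : Mf = P.image w := by
    apply Finset.coe_injective
    rw [hMf_coe]
    ext x
    simp only [Finset.coe_image, Set.mem_image, Finset.mem_coe, hP_def, Finset.mem_filter,
      Finset.mem_Icc]
    rw [← hmesa]
    constructor
    · rintro ⟨i, hi2, hi22, ha, hb, hc, hval⟩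
      rw [h2n] at hi22
      exact ⟨i, ⟨⟨by omega, by omega⟩, ha, hb, hc⟩, hval⟩
    · rintro ⟨i, ⟨⟨hi1, hi2⟩, ha, hb, hc⟩, hval⟩
      exact ⟨i, by omega, by omega, ha, hb, hc, hval⟩
  have hPcard_ge : 2*k-1 ≤ P.card := by
    rw [hMP] at hMcard
    calc 2*k-1 = (P.image w).card := hMcard.symm
    _ ≤ P.card := Finset.card_image_le
  -- spacing of plateau positions
  have hsp : ∀ i ∈ P, ∀ i' ∈ P, i < i' → i + 3 ≤ i' := by
    intro i hi i' hi' hlt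
    by_contra hcon
    push_neg at hcon
    simp only [hP_def, Finset.mem_filter, Finset.mem_Icc] at hi hi'
    obtain ⟨⟨hi1, hi2⟩, ha, hb, hc⟩ := hi
    obtain ⟨⟨hi1', hi2'⟩, ha', hb', hc'⟩ := hi'
    rcases (show i' = i + 1 ∨ i' = i + 2 by omega) with h | h
    · rw [h] at ha'
      have e : i + 1 - 1 = i := by omega
      rw [e] at ha'
      omega
    · rw [h] at ha'
      have e : i + 2 - 1 = i + 1 := by omega
      rw [e] at ha'
      omega
  have hP_sub : ∀ i ∈ P, 2 ≤ i ∧ i ≤ 6*k-4 := by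
    intro i hi
    simp only [hP_def, Finset.mem_filter, Finset.mem_Icc] at hi
    exact hi.1
  have hinj : Set.InjOn (fun i => (i+1)/3) P := by
    intro a ha b hb hab
    simp only at hab
    rcases lt_trichotomy a b with h | h | h
    · have := hsp a ha b hb h
      have := hP_sub a ha
      omega
    · exact h
    · have := hsp b hb a ha h
      have := hP_sub b hb
      omega
  have hPcard : P.card = 2*k-1 := by
    have himg : P.image (fun i => (i+1)/3) ⊆ Finset.Icc 1 (2*k-1) := by
      intro t ht
      obtain ⟨i, hi, rfl⟩ := Finset.mem_image.mp ht
      have := hP_sub i hi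
      simp only [Finset.mem_Icc]
      omega
    have h1 : P.card = (P.image (fun i => (i+1)/3)).card :=
      (Finset.card_image_of_injOn hinj).symm
    have h2 : (P.image (fun i => (i+1)/3)).card ≤ 2*k-1 := by
      calc _ ≤ (Finset.Icc 1 (2*k-1)).card := Finset.card_le_card himg
      _ = 2*k-1 := by rw [Nat.card_Icc]; omega
    omega
  have himg_eq : P.image (fun i => (i+1)/3) = Finset.Icc 1 (2*k-1) := by
    apply Finset.eq_of_subset_of_card_le
    · intro t ht
      obtain ⟨i, hi, rfl⟩ := Finset.mem_image.mp ht
      have := hP_sub i hi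
      simp only [Finset.mem_Icc]
      omega
    · rw [Nat.card_Icc, Finset.card_image_of_injOn hinj, hPcard]
      omega
  have hsurj : ∀ t, 1 ≤ t → t ≤ 2*k-1 → ∃ p ∈ P, (p+1)/3 = t := by
    intro t ht1 ht2
    have : t ∈ P.image (fun i => (i+1)/3) := by
      rw [himg_eq]; exact Finset.mem_Icc.mpr ⟨ht1, ht2⟩
    obtain ⟨p, hp, he⟩ := Finset.mem_image.mp this
    exact ⟨p, hp, he⟩
  -- lower bound for plateau positions
  have hA : ∀ t, 1 ≤ t → t ≤ 2*k-1 → ∀ p ∈ P, (p+1)/3 = t → 3*t-1 ≤ p := by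
    intro t
    induction t with
    | zero => omega
    | succ s ih =>
      intro h1 h2 p hp hphi
      by_cases hs0 : s = 0
      · have := hP_sub p hp
        omega
      · obtain ⟨p', hp', hphi'⟩ := hsurj s (by omega) (by omega)
        have hlb := ih (by omega) (by omega) p' hp' hphi'
        have hlt : p' < p := by omega
        have := hsp p' hp' p hp hlt
        omega
  -- upper bound
  have hB : ∀ d t, t + d = 2*k-1 → 1 ≤ t → ∀ p ∈ P, (p+1)/3 = t → p ≤ 3*t-1 := by
    intro d
    induction d with
    | zero =>
      intro t he h1 p hp hphi
      have := hP_sub p hp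
      omega
    | succ s ih =>
      intro t he h1 p hp hphi
      obtain ⟨p', hp', hphi'⟩ := hsurj (t+1) (by omega) (by omega)
      have hub := ih (t+1) (by omega) (by omega) p' hp' hphi'
      have hlt : p < p' := by omega
      have := hsp p hp p' hp' hlt
      omega
  have hP3 : ∀ t, 1 ≤ t → t ≤ 2*k-1 → (3*t-1) ∈ P := by
    intro t ht1 ht2
    obtain ⟨p, hp, hphi⟩ := hsurj t ht1 ht2
    have ha := hA t ht1 ht2 p hp hphi
    have hb := hB (2*k-1-t) t (by omega) ht1 p hp hphi
    have : p = 3*t-1 := by omega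
    rw [← this]
    exact hp
  have hplateau : ∀ t, 1 ≤ t → t ≤ 2*k-1 →
      w (3*t-2) < w (3*t-1) ∧ w (3*t-1) = w (3*t) ∧ w (3*t+1) < w (3*t-1) := by
    intro t ht1 ht2
    have h := hP3 t ht1 ht2
    simp only [hP_def, Finset.mem_filter, Finset.mem_Icc] at h
    obtain ⟨_, ha, hb, hc⟩ := h
    have e1 : 3*t-1-1 = 3*t-2 := by omega
    have e2 : 3*t-1+1 = 3*t := by omega
    have e3 : 3*t-1+2 = 3*t+1 := by omega
    rw [e1] at ha
    rw [e2] at hb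
    rw [e3] at hc
    exact ⟨ha, hb, hc⟩
  have hMval : ∀ t, 1 ≤ t → t ≤ 2*k-1 → w (3*t-1) ∈ Mf := by
    intro t ht1 ht2
    rw [hMP]
    exact Finset.mem_image_of_mem w (hP3 t ht1 ht2)
  have hMchar : ∀ x ∈ Mf, ∃ t, 1 ≤ t ∧ t ≤ 2*k-1 ∧ w (3*t-1) = x := by
    intro x hx
    rw [hMP] at hx
    obtain ⟨p, hp, hval⟩ := Finset.mem_image.mp hx
    have hmem : (p+1)/3 ∈ Finset.Icc 1 (2*k-1) := by
      rw [← himg_eq]; exact Finset.mem_image_of_mem _ hp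
    rw [Finset.mem_Icc] at hmem
    have ha := hA ((p+1)/3) hmem.1 hmem.2 p hp rfl
    have hb := hB (2*k-1-(p+1)/3) ((p+1)/3) (by omega) hmem.1 p hp rfl
    exact ⟨(p+1)/3, hmem.1, hmem.2, by rw [show 3*((p+1)/3)-1 = p by omega]; exact hval⟩
  -- triple position contradiction
  have htriple : ∀ a b c : ℕ, 1 ≤ a → a ≤ 6*k-2 → 1 ≤ b → b ≤ 6*k-2 → 1 ≤ c → c ≤ 6*k-2 →
      a ≠ b → a ≠ c → b ≠ c → w a = w b → w a = w c → False := by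
    intro a b c ha1 ha2 hb1 hb2 hc1 hc2 hab hac hbc hwab hwac
    have hx := hs2 a ha1 ha2
    have hcount := hs1 (w a) hx.1 hx.2
    have hsub3 : ({a, b, c} : Finset ℕ) ⊆ (Finset.Icc 1 (6*k-2)).filter (fun i => w i = w a) := by
      intro y hy
      simp only [Finset.mem_insert, Finset.mem_singleton] at hy
      simp only [Finset.mem_filter, Finset.mem_Icc]
      rcases hy with rfl | rfl | rfl
      · exact ⟨⟨ha1, ha2⟩, rfl⟩
      · exact ⟨⟨hb1, hb2⟩, hwab.symm⟩
      · exact ⟨⟨hc1, hc2⟩, hwac.symm⟩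
    have h3 : ({a, b, c} : Finset ℕ).card = 3 := by
      rw [Finset.card_insert_of_notMem (by simp [hab, hac]),
        Finset.card_insert_of_notMem (by simp [hbc]), Finset.card_singleton]
    have := Finset.card_le_card hsub3
    omega
  -- injectivity of plateau values
  have hm_inj : ∀ t t', 1 ≤ t → t ≤ 2*k-1 → 1 ≤ t' → t' ≤ 2*k-1 →
      w (3*t-1) = w (3*t'-1) → t = t' := by
    intro t t' ht1 ht2 ht1' ht2' he
    by_contra hne
    have hplat := (hplateau t ht1 ht2).2.1
    apply htriple (3*t-1) (3*t) (3*t'-1) (by omega) (by omega) (by omega) (by omega)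
      (by omega) (by omega) (by omega) (by omega) (by omega)
    · exact hplat
    · exact he
  -- valleys carry non-mesa values
  set Cf : Finset ℕ := Finset.Icc 1 (3*k-1) \ Mf with hCf_def
  have hCsub : Cf ⊆ Finset.Icc 1 (3*k-1) := Finset.sdiff_subset
  have hCcard : Cf.card = k := by
    rw [hCf_def, Finset.card_sdiff_of_subset hMsub', Nat.card_Icc, hMcard]
    omega
  have hval_notM : ∀ r, 1 ≤ r → r ≤ 2*k → w (3*r-2) ∉ Mf := by
    intro r hr1 hr2 hmem
    obtain ⟨t, ht1, ht2, he⟩ := hMchar _ hmem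
    have hplat := (hplateau t ht1 ht2).2.1
    exact htriple (3*t-1) (3*t) (3*r-2) (by omega) (by omega) (by omega) (by omega)
      (by omega) (by omega) (by omega) (by omega) (by omega) hplat (by rw [he])
  have hu_C : ∀ r, 1 ≤ r → r ≤ 2*k → w (3*r-2) ∈ Cf := by
    intro r hr1 hr2
    rw [hCf_def, Finset.mem_sdiff]
    refine ⟨?_, hval_notM r hr1 hr2⟩
    rw [Finset.mem_Icc]
    exact hs2 (3*r-2) (by omega) (by omega)
  -- each non-mesa value appears exactly twice among valleys
  have hval_count : ∀ x ∈ Cf, ((Finset.Icc 1 (2*k)).filter (fun r => w (3*r-2) = x)).card = 2 := by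
    intro x hx
    have hx' := Finset.mem_Icc.mp (hCsub hx)
    have hxnotM : x ∉ Mf := by
      rw [hCf_def, Finset.mem_sdiff] at hx
      exact hx.2
    have hA2 : ((Finset.Icc 1 (6*k-2)).filter (fun i => w i = x)).card = 2 := hs1 x hx'.1 hx'.2
    have heq : (Finset.Icc 1 (6*k-2)).filter (fun i => w i = x) =
        ((Finset.Icc 1 (2*k)).filter (fun r => w (3*r-2) = x)).image (fun r => 3*r-2) := by
      ext i
      simp only [Finset.mem_filter, Finset.mem_Icc, Finset.mem_image]
      constructor
      · rintro ⟨⟨hi1, hi2⟩, hwi⟩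
        rcases (show i % 3 = 0 ∨ i % 3 = 1 ∨ i % 3 = 2 by omega) with h | h | h
        · exfalso
          set t := i/3 with ht_def
          have hit : i = 3*t := by omega
          have hplat := (hplateau t (by omega) (by omega)).2.1
          apply hxnotM
          rw [← hwi, hit, ← hplat]
          exact hMval t (by omega) (by omega)
        · refine ⟨(i+2)/3, ⟨⟨by omega, by omega⟩, ?_⟩, by omega⟩
          rw [show 3*((i+2)/3)-2 = i by omega]
          exact hwi
        · exfalso
          set t := (i+1)/3 with ht_def
          have hit : i = 3*t-1 := by omega
          apply hxnotM
          rw [← hwi, hit]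
          exact hMval t (by omega) (by omega)
      · rintro ⟨r, ⟨⟨hr1, hr2⟩, hwr⟩, rfl⟩
        exact ⟨⟨by omega, by omega⟩, hwr⟩
    have hinj2 : Set.InjOn (fun r => 3*r-2) ((Finset.Icc 1 (2*k)).filter (fun r => w (3*r-2) = x)) := by
      intro a ha b hb he
      simp only at he
      simp only [Finset.coe_filter, Set.mem_setOf_eq, Finset.mem_Icc] at ha hb
      omega
    rw [heq, Finset.card_image_of_injOn hinj2] at hA2
    exact hA2
  -- 1 is not a mesa
  have h1C : 1 ∈ Cf := by
    rw [hCf_def, Finset.mem_sdiff]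
    refine ⟨Finset.mem_Icc.mpr ⟨le_refl 1, by omega⟩, ?_⟩
    intro hmem
    have h1M : (1:ℕ) ∈ M := by rw [← hMf_coe]; exact hmem
    rw [← hmesa] at h1M
    obtain ⟨i, hi2, hi22, ha, _, _, hval⟩ := h1M
    rw [h2n] at hi22
    have := hs2 (i-1) (by omega) (by omega)
    omega
  -- now the Dyck property
  refine ⟨hMsub, hcard, ?_⟩
  intro j hj
  by_cases hj0 : j = 0
  · subst hj0
    have : M ∩ Set.Icc 1 0 = ∅ := by
      rw [Set.Icc_eq_empty (by omega)]
      exact Set.inter_empty M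
    rw [this]
    simp
  have hj1 : 1 ≤ j := by omega
  have hβ_def : (M ∩ Set.Icc 1 j).ncard = rk Mf j := by
    have : M ∩ Set.Icc 1 j = ↑(Mf.filter (· ≤ j)) := by
      ext x
      simp only [Set.mem_inter_iff, Set.mem_Icc, Finset.coe_filter, Set.mem_setOf_eq]
      constructor
      · rintro ⟨hxM, h1, h2⟩
        refine ⟨?_, h2⟩
        rw [← hMf_coe] at hxM; exact hxM
      · rintro ⟨hx, h2⟩
        have hx' : x ∈ M := by rw [← hMf_coe]; exact Finset.mem_coe.mpr hx
        have := Finset.mem_Icc.mp (hMsub' hx)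
        exact ⟨hx', this.1, h2⟩
    rw [this, Set.ncard_coe_finset]
    rfl
  set γ := rk Cf j with hγ_def
  have hsum : rk Mf j + γ = j := by
    have := rk_sdiff hMsub' hj
    rw [← hCf_def] at this
    exact this
  have hγ1 : 1 ≤ γ := by
    have h0 : rk Cf 0 = 0 := rk_zero (fun y hy => (Finset.mem_Icc.mp (hCsub hy)).1)
    have := rk_lt_of_mem h1C (show 0 < 1 by omega)
    have := rk_mono Cf hj1
    omega
  have hγk : γ ≤ k := hCcard ▸ rk_le_card Cf j
  -- V: valleys with value > j
  set Vset := (Finset.Icc 1 (2*k)).filter (fun r => j < w (3*r-2)) with hV_def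
  have hVcard : Vset.card = 2*(k - γ) := by
    set Cgt := Cf.filter (fun x => j < x) with hCgt_def
    have hCgtcard : Cgt.card = k - γ := by
      have hneg : Cgt = Cf.filter (fun x => ¬ x ≤ j) := by
        ext x; simp only [hCgt_def, Finset.mem_filter]; constructor
        · rintro ⟨h1, h2⟩; exact ⟨h1, by omega⟩
        · rintro ⟨h1, h2⟩; exact ⟨h1, by omega⟩
      have := Finset.card_filter_add_card_filter_not (s := Cf) (p := (· ≤ j))
      rw [hCcard] at this
      have hrk : (Cf.filter (· ≤ j)).card = γ := rfl
      rw [hneg]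
      omega
    have hfib : ∀ r ∈ Vset, w (3*r-2) ∈ Cgt := by
      intro r hr
      simp only [hV_def, Finset.mem_filter, Finset.mem_Icc] at hr
      simp only [hCgt_def, Finset.mem_filter]
      exact ⟨hu_C r hr.1.1 hr.1.2, hr.2⟩
    rw [Finset.card_eq_sum_card_fiberwise hfib]
    have hfco : ∀ x ∈ Cgt, (Vset.filter (fun r => w (3*r-2) = x)).card = 2 := by
      intro x hx
      simp only [hCgt_def, Finset.mem_filter] at hx
      have : Vset.filter (fun r => w (3*r-2) = x) =
          (Finset.Icc 1 (2*k)).filter (fun r => w (3*r-2) = x) := by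
        rw [hV_def, Finset.filter_filter]
        apply Finset.filter_congr
        intro r hr
        constructor
        · rintro ⟨_, h⟩; exact h
        · intro h; exact ⟨by omega, h⟩
      rw [this]
      exact hval_count x hx.1
    rw [Finset.sum_congr rfl hfco, Finset.sum_const, smul_eq_mul, hCgtcard]
    ring
  -- U: slots adjacent to high valleys
  set Uset := (Finset.Icc 1 (2*k-1)).filter (fun t => j < w (3*t-2) ∨ j < w (3*t+1)) with hU_def
  have hUV : Vset.card ≤ Uset.card := by
    have hVmem : ∀ r, r ∈ Vset ↔ (1 ≤ r ∧ r ≤ 2*k ∧ j < w (3*r-2)) := by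
      intro r
      simp only [hV_def, Finset.mem_filter, Finset.mem_Icc]
      tauto
    have hUmem : ∀ t, t ∈ Uset ↔ (1 ≤ t ∧ t ≤ 2*k-1 ∧ (j < w (3*t-2) ∨ j < w (3*t+1))) := by
      intro t
      simp only [hU_def, Finset.mem_filter, Finset.mem_Icc]
      tauto
    by_cases h2k : 2*k ∈ Vset
    · have hTne : ((Finset.Icc 1 (2*k)).filter (fun r => r ∉ Vset)).Nonempty := by
        have h2 := hval_count 1 h1C
        have hne : ((Finset.Icc 1 (2*k)).filter (fun r => w (3*r-2) = 1)).Nonempty := by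
          rw [← Finset.card_pos]; omega
        obtain ⟨r1, hr1⟩ := hne
        simp only [Finset.mem_filter, Finset.mem_Icc] at hr1
        refine ⟨r1, Finset.mem_filter.mpr ⟨Finset.mem_Icc.mpr hr1.1, ?_⟩⟩
        rw [hVmem]
        push_neg
        intro _ _
        omega
      obtain ⟨r0, hr0a, hr0b, hr0V, hr0max⟩ :
          ∃ r0, 1 ≤ r0 ∧ r0 ≤ 2*k ∧ r0 ∉ Vset ∧
            ∀ r', 1 ≤ r' → r' ≤ 2*k → r' ∉ Vset → r' ≤ r0 := by
        have hm := Finset.max'_mem _ hTne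
        rw [Finset.mem_filter, Finset.mem_Icc] at hm
        refine ⟨_, hm.1.1, hm.1.2, hm.2, ?_⟩
        intro r' h1 h2 h3
        exact Finset.le_max' _ r' (by rw [Finset.mem_filter, Finset.mem_Icc]; exact ⟨⟨h1, h2⟩, h3⟩)
      have hr0ne : r0 ≠ 2*k := fun h => hr0V (h ▸ h2k)
      have hr01 : r0 + 1 ∈ Vset := by
        by_contra hcon
        have := hr0max (r0+1) (by omega) (by omega) hcon
        omega
      apply Finset.card_le_card_of_injOn (fun r => if r = 2*k then r0 else r)
      · intro r hr
        rw [Finset.mem_coe, hVmem] at hr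
        by_cases hre : r = 2*k
        · simp only [if_pos hre, Finset.mem_coe]
          rw [hUmem]
          rw [hVmem] at hr01
          refine ⟨by omega, by omega, Or.inr ?_⟩
          have e : 3*(r0+1)-2 = 3*r0+1 := by omega
          rw [← e]
          exact hr01.2.2
        · simp only [if_neg hre, Finset.mem_coe]
          rw [hUmem]
          exact ⟨hr.1, by omega, Or.inl hr.2.2⟩
      · intro a ha b hb he
        simp only [Finset.mem_coe] at ha hb
        have he' : (if a = 2*k then r0 else a) = (if b = 2*k then r0 else b) := he
        by_cases hae : a = 2*k <;> by_cases hbe : b = 2*k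
        · omega
        · rw [if_pos hae, if_neg hbe] at he'
          rw [← he'] at hb
          exact absurd hb hr0V
        · rw [if_neg hae, if_pos hbe] at he'
          rw [he'] at ha
          exact absurd ha hr0V
        · rwa [if_neg hae, if_neg hbe] at he'
    · apply Finset.card_le_card
      intro r hr
      have hrne : r ≠ 2*k := fun h => h2k (h ▸ hr)
      rw [hVmem] at hr
      rw [hUmem]
      exact ⟨hr.1, by omega, Or.inl hr.2.2⟩
  -- mesas above j
  have hMgt : Uset.card ≤ (Mf.filter (fun x => j < x)).card := by
    apply Finset.card_le_card_of_injOn (fun t => w (3*t-1))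
    · intro t ht
      simp only [Finset.mem_coe, hU_def, Finset.mem_filter, Finset.mem_Icc] at ht
      obtain ⟨⟨ht1, ht2⟩, hd⟩ := ht
      simp only [Finset.mem_coe, Finset.mem_filter]
      refine ⟨hMval t ht1 ht2, ?_⟩
      obtain ⟨hasc, _, hdesc⟩ := hplateau t ht1 ht2
      rcases hd with h | h
      · omega
      · omega
    · intro a ha b hb he
      simp only [Finset.mem_coe, hU_def, Finset.mem_filter, Finset.mem_Icc] at ha hb
      exact hm_inj a b ha.1.1 ha.1.2 hb.1.1 hb.1.2 he
  -- conclude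
  have hMneg : rk Mf j + (Mf.filter (fun x => j < x)).card = 2*k-1 := by
    have hneg : Mf.filter (fun x => j < x) = Mf.filter (fun x => ¬ x ≤ j) := by
      ext x; simp only [Finset.mem_filter]; constructor
      · rintro ⟨h1, h2⟩; exact ⟨h1, by omega⟩
      · rintro ⟨h1, h2⟩; exact ⟨h1, by omega⟩
    have := Finset.card_filter_add_card_filter_not (s := Mf) (p := (· ≤ j))
    rw [hMcard] at this
    rw [hneg]
    exact this
  rw [hβ_def]
  set β := rk Mf j with hβ'
  have hβγ : β ≤ 2*γ - 1 := by omega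
  have hjβ : j - β = γ := by omega
  rw [hjβ]
  have h1 : k * β ≤ k * (2*γ-1) := Nat.mul_le_mul_left k hβγ
  have e1 : k*(2*γ-1) + k = 2*(k*γ) := by
    have : k*(2*γ-1) + k*1 = k*((2*γ-1)+1) := by rw [← Nat.mul_add]
    rw [mul_one] at this
    rw [this, show (2*γ-1)+1 = 2*γ by omega]
    ring
  have e2 : (2*k-1)*γ + γ = 2*(k*γ) := by
    have : (2*k-1)*γ + 1*γ = ((2*k-1)+1)*γ := by rw [← Nat.add_mul]
    rw [one_mul] at this
    rw [this, show (2*k-1)+1 = 2*k by omega]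
    ring
  omega

lemma enum_inj {s : Finset ℕ} {n : ℕ} (hs : s ⊆ Finset.Icc 1 n) {t t' : ℕ}
    (h1 : 1 ≤ t) (h2 : t ≤ s.card) (h1' : 1 ≤ t') (h2' : t' ≤ s.card)
    (h : enum s t = enum s t') : t = t' := by
  have a := rk_enum hs h1 h2
  have b := rk_enum hs h1' h2'
  rw [h] at a
  omega

lemma backward (k : ℕ) (hk : 1 ≤ k) (S : Set ℕ) (hS : IsDyckNorthSet k S) :
    S ∈ AMS (3*k-1) ∧ S.ncard = 2*k-1 := by
  classical
  obtain ⟨hsub, hcard, hdyck⟩ := hS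
  set Sf : Finset ℕ := (Finset.Icc 1 (3*k-1)).filter (· ∈ S) with hSf_def
  have hSf_coe : (↑Sf : Set ℕ) = S := by
    ext x
    simp only [hSf_def, Finset.coe_filter, Set.mem_setOf_eq, Finset.mem_Icc]
    constructor
    · rintro ⟨_, h⟩; exact h
    · intro h; exact ⟨by have := hsub h; simpa using this, h⟩
  have hSsub : Sf ⊆ Finset.Icc 1 (3*k-1) := Finset.filter_subset _ _
  have hScard : Sf.card = 2*k-1 := by
    rw [← Set.ncard_coe_finset, hSf_coe]; exact hcard
  set Cf : Finset ℕ := Finset.Icc 1 (3*k-1) \ Sf with hCf_def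
  have hCsub : Cf ⊆ Finset.Icc 1 (3*k-1) := Finset.sdiff_subset
  have hCcard : Cf.card = k := by
    rw [hCf_def, Finset.card_sdiff_of_subset hSsub, Nat.card_Icc, hScard]
    omega
  have hdisj : ∀ x, x ∈ Sf → x ∈ Cf → False := by
    intro x hxS hxC
    rw [hCf_def, Finset.mem_sdiff] at hxC
    exact hxC.2 hxS
  -- intersection ncard = rk
  have hinter : ∀ j, (S ∩ Set.Icc 1 j).ncard = rk Sf j := by
    intro j
    have : S ∩ Set.Icc 1 j = ↑(Sf.filter (· ≤ j)) := by
      ext x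
      simp only [Set.mem_inter_iff, Set.mem_Icc, Finset.coe_filter, Set.mem_setOf_eq]
      constructor
      · rintro ⟨hxS, h1, h2⟩
        refine ⟨?_, h2⟩
        rw [← hSf_coe] at hxS; exact hxS
      · rintro ⟨hx, h2⟩
        have hx' : x ∈ S := by rw [← hSf_coe]; exact Finset.mem_coe.mpr hx
        have := Finset.mem_Icc.mp (hSsub hx)
        exact ⟨hx', this.1, h2⟩
    rw [this, Set.ncard_coe_finset]
    rfl
  -- Dyck reformulated
  have hD : ∀ j ≤ 3*k-1, k * j ≤ (3*k-1) * rk Cf j := by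
    intro j hj
    have h := hdyck j hj
    rw [hinter j] at h
    have hsum : rk Sf j + rk Cf j = j := rk_sdiff hSsub hj
    set b := rk Sf j
    set g := rk Cf j
    have hjg : j - b = g := by omega
    rw [hjg] at h
    calc k * j = k * b + k * g := by rw [← Nat.mul_add]; congr 1; omega
    _ ≤ (2*k-1) * g + k * g := by omega
    _ = (3*k-1) * g := by
        rw [← Nat.add_mul]; congr 1; omega
  -- 1 is a non-mesa value
  have h1C : 1 ∈ Cf := by
    have h := hD 1 (by omega)
    have hpos : 1 ≤ rk Cf 1 := by
      by_contra hc
      push_neg at hc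
      interval_cases h' : rk Cf 1
      · omega
    have : (Cf.filter (· ≤ 1)).Nonempty := by
      rw [← Finset.card_pos]; exact hpos
    obtain ⟨x, hx⟩ := this
    simp only [Finset.mem_filter] at hx
    have hx1 : 1 ≤ x := (Finset.mem_Icc.mp (hCsub hx.1)).1
    have : x = 1 := by omega
    rw [← this]; exact hx.1
  have hc1 : enum Cf 1 = 1 := by
    have hr : rk Cf 1 = 1 := by
      have hle : rk Cf 1 ≤ 1 := by
        unfold rk
        apply Finset.card_le_one.mpr
        intro a ha b hb
        simp only [Finset.mem_filter] at ha hb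
        have := (Finset.mem_Icc.mp (hCsub ha.1)).1
        have := (Finset.mem_Icc.mp (hCsub hb.1)).1
        omega
      have : rk Cf 0 < rk Cf 1 := rk_lt_of_mem h1C (by omega)
      omega
    have := enum_rk_of_mem hCsub h1C
    rw [hr] at this
    exact this
  -- Key fact
  have hKF : ∀ t, 1 ≤ t → t ≤ 2*k-1 → enum Cf (t/2+1) < enum Sf t := by
    intro t ht1 ht2
    set i := t/2 + 1 with hi_def
    have hik : i ≤ k := by omega
    by_cases hi1 : i = 1
    · rw [hi1, hc1]
      have hmem : enum Sf t ∈ Sf := enum_mem hSsub ht1 (by omega)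
      have h1 : 1 ≤ enum Sf t := (Finset.mem_Icc.mp (hSsub hmem)).1
      have hne : enum Sf t ≠ 1 := fun h => hdisj 1 (h ▸ hmem) h1C
      omega
    · have hi2 : 2 ≤ i := by omega
      set c := enum Cf i with hc_def
      have hcmem : c ∈ Cf := enum_mem hCsub (by omega) (by omega)
      have hc1' : 1 ≤ c := (Finset.mem_Icc.mp (hCsub hcmem)).1
      have hcn : c ≤ 3*k-1 := (Finset.mem_Icc.mp (hCsub hcmem)).2
      have hrkc : rk Cf c = i := by rw [hc_def]; exact rk_enum hCsub (by omega) (by omega)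
      have hrkcp : rk Cf (c-1) = i - 1 := by rw [hc_def]; exact rk_enum_pred hCsub (by omega) (by omega)
      -- c ≤ 3i-3
      have hc3 : c ≤ 3*i-3 := by
        by_contra hcon
        push_neg at hcon
        have hd := hD (c-1) (by omega)
        rw [hrkcp] at hd
        have h1' : 3*k*(i-1) ≤ k * (c-1) := by
          have : 3*(i-1) ≤ c - 1 := by omega
          calc 3*k*(i-1) = k * (3*(i-1)) := by ring
          _ ≤ k * (c-1) := Nat.mul_le_mul_left k this
        have h2' : (3*k-1) * (i-1) = 3*k*(i-1) - (i-1) := by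
          rw [Nat.sub_mul]; ring_nf
        have hpos : 0 < 3*k*(i-1) := Nat.mul_pos (by omega) (by omega)
        have hfin : 3*k*(i-1) ≤ 3*k*(i-1) - (i-1) := by omega
        have : 3*k*(i-1) - (i-1) < 3*k*(i-1) := Nat.sub_lt hpos (by omega)
        omega
      -- rk Sf c = c - i ≤ 2i-3
      have hrkS : rk Sf c = c - i := by
        have := rk_sdiff hSsub (show c ≤ 3*k-1 from hcn)
        rw [← hCf_def] at this
        rw [hrkc] at this
        omega
      have hlt : rk Sf c < t := by omega
      rw [lt_enum_iff hSsub ht1 (by omega)]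
      exact hlt
  have hKFc : ∀ t, 1 ≤ t → t ≤ 2*k-1 → enum Cf ((t+1)/2) < enum Sf t := by
    intro t ht1 ht2
    have hle : enum Cf ((t+1)/2) ≤ enum Cf (t/2+1) := by
      rcases Nat.lt_or_ge ((t+1)/2) (t/2+1) with h | h
      · exact le_of_lt (enum_strictMono hCsub (by omega) h (by omega))
      · have : (t+1)/2 = t/2+1 := by omega
        rw [this]
    exact lt_of_le_of_lt hle (hKF t ht1 ht2)
  -- the permutation
  set w : ℕ → ℕ := fun i => if i % 3 = 1 then enum Cf (((i+2)/3 + 1)/2) else enum Sf ((i+1)/3)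
    with hw_def
  have hw_u : ∀ r, 1 ≤ r → w (3*r-2) = enum Cf ((r+1)/2) := by
    intro r hr
    have h1 : (3*r-2) % 3 = 1 := by omega
    have h2 : (3*r-2+2)/3 = r := by omega
    simp only [hw_def, h1, if_pos, h2]
  have hw_m2 : ∀ t, 1 ≤ t → w (3*t-1) = enum Sf t := by
    intro t ht
    have h1 : (3*t-1) % 3 = 2 := by omega
    have h2 : (3*t-1+1)/3 = t := by omega
    simp only [hw_def, h1, h2]
    norm_num
  have hw_m3 : ∀ t, 1 ≤ t → w (3*t) = enum Sf t := by
    intro t ht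
    have h1 : (3*t) % 3 = 0 := by omega
    have h2 : (3*t+1)/3 = t := by omega
    simp only [hw_def, h1, h2]
    norm_num
  have hchar : ∀ i, 1 ≤ i → i ≤ 6*k-2 →
      (∃ r, 1 ≤ r ∧ r ≤ 2*k ∧ i = 3*r-2) ∨
      (∃ t, 1 ≤ t ∧ t ≤ 2*k-1 ∧ (i = 3*t-1 ∨ i = 3*t)) := by
    intro i h1 h2
    rcases (show i % 3 = 0 ∨ i % 3 = 1 ∨ i % 3 = 2 by omega) with h | h | h
    · exact Or.inr ⟨i/3, by omega, by omega, Or.inr (by omega)⟩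
    · exact Or.inl ⟨(i+2)/3, by omega, by omega, by omega⟩
    · exact Or.inr ⟨(i+1)/3, by omega, by omega, Or.inl (by omega)⟩
  -- unique positions of a given value
  have hposS : ∀ x ∈ Sf, ∀ i, 1 ≤ i → i ≤ 6*k-2 → w i = x →
      (i = 3*(rk Sf x)-1 ∨ i = 3*(rk Sf x)) := by
    intro x hx i hi1 hi2 hwi
    have htx1 : 1 ≤ rk Sf x := by
      have hx1 : 1 ≤ x := (Finset.mem_Icc.mp (hSsub hx)).1
      have h0 : rk Sf 0 = 0 := rk_zero (fun y hy => (Finset.mem_Icc.mp (hSsub hy)).1)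
      have := rk_lt_of_mem hx (show 0 < x by omega)
      omega
    have htx2 : rk Sf x ≤ 2*k-1 := hScard ▸ rk_le_card Sf x
    have hex : enum Sf (rk Sf x) = x := enum_rk_of_mem hSsub hx
    rcases hchar i hi1 hi2 with ⟨r, hr1, hr2, hreq⟩ | ⟨t, ht1, ht2, hteq⟩
    · exfalso
      rw [hreq, hw_u r hr1] at hwi
      have hmem : enum Cf ((r+1)/2) ∈ Cf := enum_mem hCsub (by omega) (by omega)
      rw [hwi] at hmem
      exact hdisj x hx hmem
    · have hwt : w i = enum Sf t := by
        rcases hteq with h | h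
        · rw [h]; exact hw_m2 t ht1
        · rw [h]; exact hw_m3 t ht1
      have : t = rk Sf x := by
        apply enum_inj hSsub ht1 (by omega) htx1 (by omega)
        rw [← hwt, hwi, hex]
      omega
  have hposC : ∀ x ∈ Cf, ∀ i, 1 ≤ i → i ≤ 6*k-2 → w i = x →
      (i = 6*(rk Cf x)-5 ∨ i = 6*(rk Cf x)-2) := by
    intro x hx i hi1 hi2 hwi
    have hjx1 : 1 ≤ rk Cf x := by
      have hx1 : 1 ≤ x := (Finset.mem_Icc.mp (hCsub hx)).1
      have h0 : rk Cf 0 = 0 := rk_zero (fun y hy => (Finset.mem_Icc.mp (hCsub hy)).1)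
      have := rk_lt_of_mem hx (show 0 < x by omega)
      omega
    have hjx2 : rk Cf x ≤ k := hCcard ▸ rk_le_card Cf x
    have hex : enum Cf (rk Cf x) = x := enum_rk_of_mem hCsub hx
    rcases hchar i hi1 hi2 with ⟨r, hr1, hr2, hreq⟩ | ⟨t, ht1, ht2, hteq⟩
    · rw [hreq, hw_u r hr1] at hwi
      have : (r+1)/2 = rk Cf x := by
        apply enum_inj hCsub (by omega) (by omega) hjx1 (by omega)
        rw [hwi, hex]
      omega
    · exfalso
      have hwt : w i = enum Sf t := by
        rcases hteq with h | h
        · rw [h]; exact hw_m2 t ht1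
        · rw [h]; exact hw_m3 t ht1
      have hmem : enum Sf t ∈ Sf := enum_mem hSsub ht1 (by omega)
      rw [← hwt, hwi] at hmem
      exact hdisj x hmem hx
  -- Stirling property
  have h2n : 2*(3*k-1) = 6*k-2 := by omega
  have hstir : IsStirling (3*k-1) w := by
    refine ⟨?_, ?_, ?_⟩
    · -- each value appears exactly twice
      intro x hx1 hx2
      rw [h2n]
      by_cases hxS : x ∈ Sf
      · set t := rk Sf x with ht_def
        have htx1 : 1 ≤ t := by
          have h0 : rk Sf 0 = 0 := rk_zero (fun y hy => (Finset.mem_Icc.mp (hSsub hy)).1)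
          have := rk_lt_of_mem hxS (show 0 < x by omega)
          omega
        have htx2 : t ≤ 2*k-1 := hScard ▸ rk_le_card Sf x
        have hex : enum Sf t = x := enum_rk_of_mem hSsub hxS
        have hset : (Finset.Icc 1 (6*k-2)).filter (fun i => w i = x) = {3*t-1, 3*t} := by
          ext i
          simp only [Finset.mem_filter, Finset.mem_Icc, Finset.mem_insert, Finset.mem_singleton]
          constructor
          · rintro ⟨⟨hi1, hi2⟩, hwi⟩
            exact hposS x hxS i hi1 hi2 hwi
          · rintro (h | h) <;> subst h
            · refine ⟨⟨by omega, by omega⟩, ?_⟩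
              rw [hw_m2 t htx1, hex]
            · refine ⟨⟨by omega, by omega⟩, ?_⟩
              rw [hw_m3 t htx1, hex]
        rw [hset]
        rw [Finset.card_insert_of_notMem (by simp; omega), Finset.card_singleton]
      · have hxC : x ∈ Cf := by
          rw [hCf_def, Finset.mem_sdiff]
          exact ⟨Finset.mem_Icc.mpr ⟨hx1, hx2⟩, hxS⟩
        set jx := rk Cf x with hj_def
        have hjx1 : 1 ≤ jx := by
          have h0 : rk Cf 0 = 0 := rk_zero (fun y hy => (Finset.mem_Icc.mp (hCsub hy)).1)
          have := rk_lt_of_mem hxC (show 0 < x by omega)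
          omega
        have hjx2 : jx ≤ k := hCcard ▸ rk_le_card Cf x
        have hex : enum Cf jx = x := enum_rk_of_mem hCsub hxC
        have hset : (Finset.Icc 1 (6*k-2)).filter (fun i => w i = x) = {6*jx-5, 6*jx-2} := by
          ext i
          simp only [Finset.mem_filter, Finset.mem_Icc, Finset.mem_insert, Finset.mem_singleton]
          constructor
          · rintro ⟨⟨hi1, hi2⟩, hwi⟩
            exact hposC x hxC i hi1 hi2 hwi
          · rintro (h | h) <;> subst h
            · refine ⟨⟨by omega, by omega⟩, ?_⟩
              have e1 : 6*jx-5 = 3*(2*jx-1)-2 := by omega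
              have e2 : ((2*jx-1)+1)/2 = jx := by omega
              rw [e1, hw_u (2*jx-1) (by omega), e2, hex]
            · refine ⟨⟨by omega, by omega⟩, ?_⟩
              have e1 : 6*jx-2 = 3*(2*jx)-2 := by omega
              have e2 : ((2*jx)+1)/2 = jx := by omega
              rw [e1, hw_u (2*jx) (by omega), e2, hex]
        rw [hset]
        rw [Finset.card_insert_of_notMem (by simp; omega), Finset.card_singleton]
    · -- range
      intro i hi1 hi2
      rw [h2n] at hi2
      rcases hchar i hi1 hi2 with ⟨r, hr1, hr2, hreq⟩ | ⟨t, ht1, ht2, hteq⟩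
      · rw [hreq, hw_u r hr1]
        have hmem : enum Cf ((r+1)/2) ∈ Cf := enum_mem hCsub (by omega) (by omega)
        have := Finset.mem_Icc.mp (hCsub hmem)
        exact this
      · have hwt : w i = enum Sf t := by
          rcases hteq with h | h
          · rw [h]; exact hw_m2 t ht1
          · rw [h]; exact hw_m3 t ht1
        rw [hwt]
        have hmem : enum Sf t ∈ Sf := enum_mem hSsub ht1 (by omega)
        exact Finset.mem_Icc.mp (hSsub hmem)
    · -- between copies
      intro i j l hi1 hij hjl hl2 hwil
      rw [h2n] at hl2
      have hi2 : i ≤ 6*k-2 := by omega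
      have hl1 : 1 ≤ l := by omega
      -- value x = w i
      set x := w i with hx_def
      have hxmem : 1 ≤ x ∧ x ≤ 3*k-1 := by
        rcases hchar i hi1 hi2 with ⟨r, hr1, hr2, hreq⟩ | ⟨t, ht1, ht2, hteq⟩
        · rw [hx_def, hreq, hw_u r hr1]
          exact Finset.mem_Icc.mp (hCsub (enum_mem hCsub (by omega) (by omega)))
        · have hwt : w i = enum Sf t := by
            rcases hteq with h | h
            · rw [h]; exact hw_m2 t ht1
            · rw [h]; exact hw_m3 t ht1
          rw [hx_def, hwt]
          exact Finset.mem_Icc.mp (hSsub (enum_mem hSsub ht1 (by omega)))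
      by_cases hxS : x ∈ Sf
      · -- copies adjacent: contradiction with i < j < l
        have hpi := hposS x hxS i hi1 hi2 rfl
        have hpl := hposS x hxS l hl1 hl2 hwil.symm
        omega
      · have hxC : x ∈ Cf := by
          rw [hCf_def, Finset.mem_sdiff]
          exact ⟨Finset.mem_Icc.mpr hxmem, hxS⟩
        have hpi := hposC x hxC i hi1 hi2 rfl
        have hpl := hposC x hxC l hl1 hl2 hwil.symm
        set jx := rk Cf x with hj_def
        have hjx1 : 1 ≤ jx := by
          have h0 : rk Cf 0 = 0 := rk_zero (fun y hy => (Finset.mem_Icc.mp (hCsub hy)).1)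
          have := rk_lt_of_mem hxC (show 0 < x by omega)
          omega
        have hjx2 : jx ≤ k := hCcard ▸ rk_le_card Cf x
        have hiv : i = 6*jx-5 := by omega
        have hlv : l = 6*jx-2 := by omega
        -- j is 6jx-4 or 6jx-3, value enum Sf (2jx-1)
        have hwj : w j = enum Sf (2*jx-1) := by
          rcases (show j = 6*jx-4 ∨ j = 6*jx-3 by omega) with h | h
          · have e : 6*jx-4 = 3*(2*jx-1)-1 := by omega
            rw [h, e]; exact hw_m2 (2*jx-1) (by omega)
          · have e : 6*jx-3 = 3*(2*jx-1) := by omega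
            rw [h, e]; exact hw_m3 (2*jx-1) (by omega)
        have hex : enum Cf jx = x := enum_rk_of_mem hCsub hxC
        have hkf := hKF (2*jx-1) (by omega) (by omega)
        have e2 : (2*jx-1)/2 + 1 = jx := by omega
        rw [e2, hex] at hkf
        rw [hwj]
        exact hkf
  -- Mesa set = S
  have hmesa : MesaSet (3*k-1) w = S := by
    ext x
    unfold MesaSet
    simp only [Set.mem_setOf_eq]
    constructor
    · rintro ⟨i, hi2, hi22, hasc, hplat, hdesc, hval⟩
      rw [h2n] at hi22
      rcases hchar i (by omega) (by omega) with ⟨r, hr1, hr2, hreq⟩ | ⟨t, ht1, ht2, hteq⟩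
      · exfalso
        -- w i ∈ Cf but w (i+1) ∈ Sf and they are equal
        have hr2' : r ≤ 2*k-1 := by omega
        have hwi : w i = enum Cf ((r+1)/2) := by rw [hreq]; exact hw_u r hr1
        have hwi1 : w (i+1) = enum Sf r := by
          have e : i + 1 = 3*r-1 := by omega
          rw [e]; exact hw_m2 r hr1
        have hmC : enum Cf ((r+1)/2) ∈ Cf := enum_mem hCsub (by omega) (by omega)
        have hmS : enum Sf r ∈ Sf := enum_mem hSsub hr1 (by omega)
        rw [hwi, hwi1] at hplat
        rw [hplat] at hmC
        exact hdisj _ hmS hmC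
      · rcases hteq with h | h
        · -- i = 3t-1 : genuine mesa, value in Sf ⊆ S
          have hwi : w i = enum Sf t := by rw [h]; exact hw_m2 t ht1
          rw [← hval, hwi, ← hSf_coe]
          exact Finset.mem_coe.mpr (enum_mem hSsub ht1 (by omega))
        · exfalso
          have hwi : w i = enum Sf t := by rw [h]; exact hw_m3 t ht1
          have hwi1 : w (i+1) = enum Cf ((t+2)/2) := by
            have e : i + 1 = 3*(t+1)-2 := by omega
            have e2 : ((t+1)+1)/2 = (t+2)/2 := by omega
            rw [e, hw_u (t+1) (by omega), e2]
          have hmS : enum Sf t ∈ Sf := enum_mem hSsub ht1 (by omega)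
          have hmC : enum Cf ((t+2)/2) ∈ Cf := by
            apply enum_mem hCsub (by omega)
            rw [hCcard]
            omega
          rw [hwi, hwi1] at hplat
          rw [← hplat] at hmC
          exact hdisj _ hmS hmC
    · intro hxS
      have hxSf : x ∈ Sf := by rw [← hSf_coe] at hxS; exact hxS
      set t := rk Sf x with ht_def
      have htx1 : 1 ≤ t := by
        have h0 : rk Sf 0 = 0 := rk_zero (fun y hy => (Finset.mem_Icc.mp (hSsub hy)).1)
        have hx1 : 1 ≤ x := (Finset.mem_Icc.mp (hSsub hxSf)).1
        have := rk_lt_of_mem hxSf (show 0 < x by omega)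
        omega
      have htx2 : t ≤ 2*k-1 := hScard ▸ rk_le_card Sf x
      have hex : enum Sf t = x := enum_rk_of_mem hSsub hxSf
      refine ⟨3*t-1, by omega, by omega, ?_, ?_, ?_, ?_⟩
      · -- ascent
        have e : 3*t-1-1 = 3*t-2 := by omega
        rw [e, hw_u t htx1, hw_m2 t htx1]
        exact hKFc t htx1 htx2
      · have e : 3*t-1+1 = 3*t := by omega
        rw [e, hw_m2 t htx1, hw_m3 t htx1]
      · have e : 3*t-1+2 = 3*(t+1)-2 := by omega
        have e2 : ((t+1)+1)/2 = t/2+1 := by omega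
        rw [e, hw_u (t+1) (by omega), e2, hw_m2 t htx1]
        exact hKF t htx1 htx2
      · rw [hw_m2 t htx1, hex]
  exact ⟨⟨w, hstir, hmesa⟩, hcard⟩

theorem maximal_mesa_dyck_bijection (k : ℕ) (hk : 1 ≤ k) :
    Set.BijOn (fun M => M) {M | M ∈ AMS (3*k-1) ∧ M.ncard = 2*k-1}
      {S | IsDyckNorthSet k S} := by
  refine ⟨?_, ?_, ?_⟩
  · intro M hM
    exact forward k hk M hM.1 hM.2
  · intro a _ b _ h
    exact h
  · intro S hS
    exact ⟨S, backward k hk S hS, rfl⟩
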